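/- Let A be a Krull–Schmidt category and let C = (X_•, d_•) be a complex in A such that d_i ∉ rad_A(X_i, X_{i+1}) for some i. Then there exist a non-zero indecomposable object M of A and objects B_i, B_{i+1} with X_i ≅ B_i ⊕ M and X_{i+1} ≅ B_{i+1} ⊕ M, such that C is isomorphic in the category of complexes over A to a direct sum C′ ⊕ C″, where C″ is the complex ⋯ → 0 → M → M → 0 → ⋯ with the identity differential and M placed in degrees i and i+1, and C′ agrees with C in all degrees other than i and i+1 and has terms B_i and B_{i+1} in degrees i and i+1. In particular, C is homotopy equivalent to C′. -/

import Mathlib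

open CategoryTheory CategoryTheory.Limits

universe w v u

/-- A morphism `f : X ⟶ Y` in a preadditive category lies in the *radical* if for every
object `Z` and all morphisms `a : Z ⟶ X`, `b : Y ⟶ Z`, the composite `a ≫ f ≫ b` lies in the
Jacobson radical of the endomorphism ring `End Z`. -/
def CategoryTheory.InRadical {A : Type u} [Category.{v} A] [Preadditive A]
    {X Y : A} (f : X ⟶ Y) : Prop :=
  ∀ (Z : A) (a : Z ⟶ X) (b : Y ⟶ Z), (a ≫ f ≫ b : End Z) ∈ (⊥ : Ideal (End Z)).jacobson

/-- A cochain complex is *minimal* if all its differentials lie in the radical. -/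
def CochainComplex.IsMinimal {A : Type u} [Category.{v} A] [Preadditive A]
    (K : CochainComplex A ℤ) : Prop :=
  ∀ i : ℤ, CategoryTheory.InRadical (K.d i (i + 1))


noncomputable section

namespace GEaux
set_option linter.unusedSectionVars false

variable {A : Type u} [Category.{v} A] [Preadditive A]

lemma isIso_one_add_swap {Z M : A} (p : Z ⟶ M) (q : M ⟶ Z)
    (h : IsIso (𝟙 M + q ≫ p)) : IsIso (𝟙 Z + p ≫ q) := by
  set w := inv (𝟙 M + q ≫ p) with hw_def
  have hw1 : q ≫ p ≫ w = 𝟙 M - w := by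
    have := IsIso.hom_inv_id (𝟙 M + q ≫ p)
    rw [Preadditive.add_comp, Category.id_comp, Category.assoc] at this
    rw [← hw_def] at this
    linear_combination (norm := abel) this
  have hw2 : w ≫ (q ≫ p) = 𝟙 M - w := by
    have := IsIso.inv_hom_id (𝟙 M + q ≫ p)
    rw [Preadditive.comp_add, Category.comp_id] at this
    rw [← hw_def] at this
    linear_combination (norm := abel) this
  refine ⟨𝟙 Z - p ≫ w ≫ q, ?_, ?_⟩
  · have key : (p ≫ q) ≫ p ≫ w ≫ q = p ≫ q - p ≫ w ≫ q := by
      calc (p ≫ q) ≫ p ≫ w ≫ q = p ≫ (q ≫ p ≫ w) ≫ q := by simp only [Category.assoc]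
        _ = p ≫ (𝟙 M - w) ≫ q := by rw [hw1]
        _ = p ≫ q - p ≫ w ≫ q := by
            simp [Preadditive.sub_comp, Preadditive.comp_sub]
    rw [Preadditive.add_comp, Preadditive.comp_sub, Preadditive.comp_sub,
      Category.id_comp, Category.comp_id, key]
    simp only [Category.id_comp]
    abel
  · have key : (p ≫ w ≫ q) ≫ p ≫ q = p ≫ q - p ≫ w ≫ q := by
      calc (p ≫ w ≫ q) ≫ p ≫ q = p ≫ (w ≫ (q ≫ p)) ≫ q := by simp only [Category.assoc]
        _ = p ≫ (𝟙 M - w) ≫ q := by rw [hw2]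
        _ = p ≫ q - p ≫ w ≫ q := by
            simp [Preadditive.sub_comp, Preadditive.comp_sub]
    rw [Preadditive.sub_comp, Preadditive.comp_add, Preadditive.comp_add,
      Category.id_comp, Category.comp_id, key]
    simp only [Category.id_comp]
    abel

lemma isIso_of_isIso_comp {M N : A} [IsLocalRing (End M)] [IsLocalRing (End N)]
    (f : M ⟶ N) (g : N ⟶ M) (h : IsIso (f ≫ g)) : IsIso f := by
  set r : N ⟶ M := g ≫ inv (f ≫ g) with hr_def
  have hfr : f ≫ r = 𝟙 M := by
    rw [hr_def, ← Category.assoc, IsIso.hom_inv_id]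
  set e : End N := (r ≫ f : N ⟶ N) with he_def
  have hee : e * e = e := by
    show (r ≫ f) ≫ (r ≫ f) = r ≫ f
    rw [Category.assoc, ← Category.assoc f r, hfr, Category.id_comp]
  rcases IsLocalRing.isUnit_or_isUnit_of_add_one (a := e) (b := 1 - e) (by abel) with hu | hu
  · have he1 : e = 1 := by
      have : e * e = e * 1 := by rw [hee, mul_one]
      exact hu.mul_left_cancel this
    have : r ≫ f = 𝟙 N := he1
    exact ⟨r, hfr, this⟩
  · exfalso
    have he0 : e = 0 := by
      have h1 : (1 - e) * e = (1 - e) * 0 := by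
        rw [mul_zero, sub_mul, one_mul, hee, sub_self]
      exact hu.mul_left_cancel h1
    have hf0 : f = 0 := by
      have : f = f ≫ (r ≫ f) := by rw [← Category.assoc, hfr, Category.id_comp]
      rw [this, show (r ≫ f : N ⟶ N) = (e : End N) from rfl, he0]
      simp
    haveI : IsIso ((0 : M ⟶ N) ≫ g) := hf0 ▸ h
    have h10 : (𝟙 M : M ⟶ M) = 0 := by
      have h2 := IsIso.hom_inv_id ((0 : M ⟶ N) ≫ g)
      simp only [zero_comp] at h2
      exact h2.symm
    exact one_ne_zero (α := End M) h10

lemma mem_jacobson_bot_of {R : Type*} [Ring R] (x : R)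
    (h : ∀ y : R, IsUnit (y * x + 1)) : x ∈ (⊥ : Ideal R).jacobson := by
  rw [Ideal.mem_jacobson_iff]
  intro y
  refine ⟨↑(h y).unit⁻¹, ?_⟩
  rw [Ideal.mem_bot]
  have hz : (↑(h y).unit⁻¹ : R) * (y * x + 1) = 1 := (h y).unit.inv_val
  calc (↑(h y).unit⁻¹ : R) * y * x + ↑(h y).unit⁻¹ - 1
      = (↑(h y).unit⁻¹ : R) * (y * x + 1) - 1 := by noncomm_ring
    _ = 0 := by rw [hz, sub_self]

lemma inRadical_of_not_isIso {M N : A} [IsLocalRing (End M)] [IsLocalRing (End N)]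
    {f : M ⟶ N} (h : ¬ IsIso f) : CategoryTheory.InRadical f := by
  intro Z a b
  apply mem_jacobson_bot_of (R := End Z)
  intro y
  rw [CategoryTheory.isUnit_iff_isIso]
  have hmor : ((y * (show End Z from a ≫ f ≫ b) + 1 : End Z) : Z ⟶ Z)
      = 𝟙 Z + a ≫ (f ≫ b ≫ y) := by
    show (a ≫ f ≫ b) ≫ y + 𝟙 Z = _
    simp only [Category.assoc]
    abel
  rw [hmor]
  apply isIso_one_add_swap
  -- IsIso (𝟙 M + (f ≫ b) ≫ y ≫ a)
  have hxu : ¬ IsUnit (show End M from (f ≫ b ≫ y) ≫ a) := by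
    intro hu'
    rw [CategoryTheory.isUnit_iff_isIso] at hu'
    have : IsIso (f ≫ (b ≫ y ≫ a)) := by
      simpa only [Category.assoc] using hu'
    exact h (isIso_of_isIso_comp f (b ≫ y ≫ a) this)
  have hunit : IsUnit ((1 : End M) + (show End M from (f ≫ b ≫ y) ≫ a)) := by
    rcases IsLocalRing.isUnit_or_isUnit_of_add_one
        (a := (1 : End M) + (show End M from (f ≫ b ≫ y) ≫ a))
        (b := -(show End M from (f ≫ b ≫ y) ≫ a)) (by abel) with h1 | h1
    · exact h1
    · exact absurd h1.neg (by simpa using hxu)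
  rw [CategoryTheory.isUnit_iff_isIso] at hunit
  have hid : (((1 : End M) + (show End M from (f ≫ b ≫ y) ≫ a)) : M ⟶ M)
      = 𝟙 M + (f ≫ b ≫ y) ≫ a := rfl
  rwa [hid] at hunit

open CategoryTheory

lemma inRadical_zero {X Y : A} : CategoryTheory.InRadical (0 : X ⟶ Y) := by
  intro Z a b
  have h0 : (show End Z from a ≫ (0 : X ⟶ Y) ≫ b) = 0 := by simp
  rw [show (a ≫ (0 : X ⟶ Y) ≫ b : End Z) = 0 from h0]
  exact Submodule.zero_mem _

lemma inRadical_add {X Y : A} {f g : X ⟶ Y} (hf : CategoryTheory.InRadical f)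
    (hg : CategoryTheory.InRadical g) : CategoryTheory.InRadical (f + g) := by
  intro Z a b
  have h0 : (show End Z from a ≫ (f + g) ≫ b)
      = (show End Z from a ≫ f ≫ b) + (show End Z from a ≫ g ≫ b) := by
    simp [Preadditive.add_comp, Preadditive.comp_add]
  rw [show (a ≫ (f + g) ≫ b : End Z) = _ from h0]
  exact Submodule.add_mem _ (hf Z a b) (hg Z a b)

lemma inRadical_comp {X Y X' Y' : A} {f : X ⟶ Y} (hf : CategoryTheory.InRadical f)
    (p : X' ⟶ X) (q : Y ⟶ Y') : CategoryTheory.InRadical (p ≫ f ≫ q) := by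
  intro Z a b
  have h0 : (show End Z from a ≫ (p ≫ f ≫ q) ≫ b)
      = (show End Z from (a ≫ p) ≫ f ≫ (q ≫ b)) := by
    simp only [Category.assoc]
  rw [show (a ≫ (p ≫ f ≫ q) ≫ b : End Z) = _ from h0]
  exact hf Z (a ≫ p) (q ≫ b)

lemma inRadical_sum {X Y : A} {ι : Type*} [DecidableEq ι] (s : Finset ι) (F : ι → (X ⟶ Y))
    (h : ∀ j ∈ s, CategoryTheory.InRadical (F j)) :
    CategoryTheory.InRadical (∑ j ∈ s, F j) := by
  induction s using Finset.induction with
  | empty => simpa using inRadical_zero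
  | @insert a s ha ih =>
    rw [Finset.sum_insert ha]
    exact inRadical_add (h _ (Finset.mem_insert_self _ _))
      (ih fun j hj => h j (Finset.mem_insert_of_mem hj))

lemma exists_component_not_inRadical [HasFiniteBiproducts A] {X Y : A} (f : X ⟶ Y)
    (h : ¬ CategoryTheory.InRadical f) {n m : ℕ} (Yc : Fin n → A) (Wc : Fin m → A)
    (eX : X ≅ ⨁ Yc) (eY : Y ≅ ⨁ Wc) :
    ∃ k l, ¬ CategoryTheory.InRadical
      (biproduct.ι Yc k ≫ eX.inv ≫ f ≫ eY.hom ≫ biproduct.π Wc l) := by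
  by_contra hall
  push_neg at hall
  apply h
  have hf : f = ∑ k : Fin n, ∑ l : Fin m,
      (eX.hom ≫ biproduct.π Yc k) ≫
        (biproduct.ι Yc k ≫ eX.inv ≫ f ≫ eY.hom ≫ biproduct.π Wc l) ≫
        (biproduct.ι Wc l ≫ eY.inv) := by
    have h1 : f = eX.hom ≫ (𝟙 (⨁ Yc)) ≫ eX.inv ≫ f ≫ eY.hom ≫ (𝟙 (⨁ Wc)) ≫ eY.inv := by
      simp
    conv_lhs => rw [h1, ← biproduct.total, ← biproduct.total]
    simp only [Preadditive.sum_comp, Preadditive.comp_sum, Category.assoc]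
    rw [Finset.sum_comm]
  rw [hf]
  apply inRadical_sum
  intro k _
  apply inRadical_sum
  intro l _
  exact inRadical_comp (hall k l) _ _

lemma indecomposable_of_isLocalRing [HasBinaryBiproducts A] {M : A}
    (h : IsLocalRing (End M)) : Indecomposable M := by
  constructor
  · intro hz
    haveI : Nontrivial (End M) := h.toNontrivial
    exact one_ne_zero (α := End M) (hz.eq_of_src (𝟙 M) 0)
  · intro Y Z u
    set e : End M := u.hom ≫ biprod.fst ≫ biprod.inl ≫ u.inv with he_def
    set e' : End M := u.hom ≫ biprod.snd ≫ biprod.inr ≫ u.inv with he'_def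
    have hsum : e + e' = 1 := by
      have h0 : e + e' = u.hom ≫ (biprod.fst ≫ biprod.inl + biprod.snd ≫ biprod.inr) ≫ u.inv := by
        rw [he_def, he'_def]
        simp only [Preadditive.add_comp, Preadditive.comp_add, Category.assoc]
      rw [h0, biprod.total]
      show u.hom ≫ 𝟙 _ ≫ u.inv = 𝟙 M
      simp
    have hee : e * e = e := by
      show (u.hom ≫ biprod.fst ≫ biprod.inl ≫ u.inv)
          ≫ (u.hom ≫ biprod.fst ≫ biprod.inl ≫ u.inv)
        = u.hom ≫ biprod.fst ≫ biprod.inl ≫ u.inv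
      simp
    have he'e' : e' * e' = e' := by
      show (u.hom ≫ biprod.snd ≫ biprod.inr ≫ u.inv)
          ≫ (u.hom ≫ biprod.snd ≫ biprod.inr ≫ u.inv)
        = u.hom ≫ biprod.snd ≫ biprod.inr ≫ u.inv
      simp
    rcases IsLocalRing.isUnit_or_isUnit_of_add_one hsum with hu | hu
    · -- e is a unit, hence e = 1, hence Z is zero
      have he1 : e = 1 := hu.mul_left_cancel (by rw [hee, mul_one])
      have he1m : u.hom ≫ biprod.fst ≫ biprod.inl ≫ u.inv = 𝟙 M := he1
      have h2 : (biprod.fst ≫ biprod.inl : Y ⊞ Z ⟶ Y ⊞ Z) = 𝟙 (Y ⊞ Z) := by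
        have := congrArg (fun t => u.inv ≫ t ≫ u.hom) he1m
        simpa using this
      have h3 : (𝟙 Z : Z ⟶ Z) = 0 := by
        have := congrArg (fun t => (biprod.inr : Z ⟶ Y ⊞ Z) ≫ t ≫ (biprod.snd : Y ⊞ Z ⟶ Z)) h2
        simp at this
        first | exact this.symm | exact this
      exact Or.inr ((IsZero.iff_id_eq_zero Z).mpr h3)
    · -- e' is a unit, hence e' = 1, hence Y is zero
      have he1 : e' = 1 := hu.mul_left_cancel (by rw [he'e', mul_one])
      have he1m : u.hom ≫ biprod.snd ≫ biprod.inr ≫ u.inv = 𝟙 M := he1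
      have h2 : (biprod.snd ≫ biprod.inr : Y ⊞ Z ⟶ Y ⊞ Z) = 𝟙 (Y ⊞ Z) := by
        have := congrArg (fun t => u.inv ≫ t ≫ u.hom) he1m
        simpa using this
      have h3 : (𝟙 Y : Y ⟶ Y) = 0 := by
        have := congrArg (fun t => (biprod.inl : Y ⟶ Y ⊞ Z) ≫ t ≫ (biprod.fst : Y ⊞ Z ⟶ Y)) h2
        simp at this
        first | exact this.symm | exact this
      exact Or.inl ((IsZero.iff_id_eq_zero Y).mpr h3)

lemma biproduct_splitOff [HasFiniteBiproducts A] [HasBinaryBiproducts A] {n : ℕ}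
    (Yc : Fin n → A) (k : Fin n) :
    ∃ e : (⨁ Yc) ≅ (Yc k) ⊞ (⨁ (fun j : {j : Fin n // j ≠ k} => Yc j.1)),
      e.hom ≫ biprod.fst = biproduct.π Yc k ∧ biprod.inl ≫ e.inv = biproduct.ι Yc k := by
  let b : BinaryBicone (Yc k) (⨁ (fun j : {j : Fin n // j ≠ k} => Yc j.1)) :=
    { pt := ⨁ Yc
      fst := biproduct.π Yc k
      snd := biproduct.lift (fun j => biproduct.π Yc j.1)
      inl := biproduct.ι Yc k
      inr := biproduct.desc (fun j => biproduct.ι Yc j.1)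
      inl_fst := by simp
      inl_snd := by
        ext j
        simp only [Category.assoc, biproduct.lift_π, zero_comp, Limits.comp_zero]
        exact biproduct.ι_π_ne Yc (Ne.symm j.2)
      inr_fst := by
        ext j
        simp only [biproduct.ι_desc_assoc, zero_comp, Limits.comp_zero]
        exact biproduct.ι_π_ne Yc j.2
      inr_snd := by
        ext j j'
        simp only [Category.assoc, biproduct.lift_π, biproduct.ι_desc_assoc, Category.comp_id,
          Category.id_comp]
        by_cases hjj : j' = j
        · subst hjj
          simp
        · rw [biproduct.ι_π_ne _ (fun hh => hjj (Subtype.ext hh)),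
            biproduct.ι_π_ne _ hjj] }
  have hb : b.IsBilimit := by
    apply isBinaryBilimitOfTotal
    show biproduct.π Yc k ≫ biproduct.ι Yc k +
      biproduct.lift (fun j : {j : Fin n // j ≠ k} => biproduct.π Yc j.1) ≫
        biproduct.desc (fun j : {j : Fin n // j ≠ k} => biproduct.ι Yc j.1)
      = 𝟙 (⨁ Yc)
    rw [biproduct.lift_desc]
    have hsub : ∑ j : {j : Fin n // j ≠ k}, biproduct.π Yc j.1 ≫ biproduct.ι Yc j.1
        = ∑ j ∈ Finset.univ.erase k, biproduct.π Yc j ≫ biproduct.ι Yc j := by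
      refine (Finset.sum_subtype (Finset.univ.erase k) (fun x => ?_)
        (fun j => biproduct.π Yc j ≫ biproduct.ι Yc j)).symm
      simp [Finset.mem_erase]
    rw [hsub, Finset.add_sum_erase _ (fun j => biproduct.π Yc j ≫ biproduct.ι Yc j)
      (Finset.mem_univ k), biproduct.total]
  refine ⟨biprod.uniqueUpToIso _ _ hb, ?_, ?_⟩
  · show (biprod.lift b.fst b.snd) ≫ biprod.fst = biproduct.π Yc k
    simp [b]
  · show biprod.inl ≫ (biprod.desc b.inl b.inr) = biproduct.ι Yc k
    simp [b]

section Construction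

open ZeroObject

variable [HasFiniteBiproducts A] [HasBinaryBiproducts A]

/-- The objects of the reduced complex. -/
def GEX' (C : CochainComplex A ℤ) (i : ℤ) (Bi Bi1 : A) (j : ℤ) : A :=
  if j = i then Bi else if j = i + 1 then Bi1 else C.X j

lemma GEX'_at_i (C : CochainComplex A ℤ) (i : ℤ) (Bi Bi1 : A) :
    GEX' C i Bi Bi1 i = Bi := if_pos rfl

lemma GEX'_at_i1 (C : CochainComplex A ℤ) (i : ℤ) (Bi Bi1 : A) :
    GEX' C i Bi Bi1 (i + 1) = Bi1 := by
  have : i + 1 ≠ i := by omega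
  simp [GEX', this]

lemma GEX'_other (C : CochainComplex A ℤ) (i : ℤ) (Bi Bi1 : A) (j : ℤ)
    (h1 : j ≠ i) (h2 : j ≠ i + 1) : GEX' C i Bi Bi1 j = C.X j := by
  simp [GEX', h1, h2]

/-- The differentials of the reduced complex. -/
def GEd' (C : CochainComplex A ℤ) (i : ℤ) (M Bi Bi1 : A) (g : Bi ⟶ Bi1)
    (U : C.X i ≅ M ⊞ Bi) (V : C.X (i + 1) ≅ M ⊞ Bi1) (j : ℤ) :
    GEX' C i Bi Bi1 j ⟶ GEX' C i Bi Bi1 (j + 1) :=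
  if hj : j = i then
    eqToHom (by rw [hj]; exact GEX'_at_i C i Bi Bi1) ≫ g ≫
      eqToHom (by rw [hj]; exact (GEX'_at_i1 C i Bi Bi1).symm)
  else if hj1 : j + 1 = i then
    eqToHom (GEX'_other C i Bi Bi1 j hj (by omega)) ≫ C.d j i ≫ U.hom ≫ biprod.snd ≫
      eqToHom (by rw [hj1]; exact (GEX'_at_i C i Bi Bi1).symm)
  else if hj2 : j = i + 1 then
    eqToHom (by rw [hj2]; exact GEX'_at_i1 C i Bi Bi1) ≫ biprod.inr ≫ V.inv ≫
      C.d (i + 1) (j + 1) ≫ eqToHom (GEX'_other C i Bi Bi1 (j + 1) (by omega) (by omega)).symm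
  else
    eqToHom (GEX'_other C i Bi Bi1 j hj hj2) ≫ C.d j (j + 1) ≫
      eqToHom (GEX'_other C i Bi Bi1 (j + 1) hj1 (by omega)).symm

/-- The objects of the contractible complex. -/
def GEX'' (i : ℤ) (M : A) (j : ℤ) : A := if j = i then M else if j = i + 1 then M else 0

lemma GEX''_at_i (i : ℤ) (M : A) : GEX'' i M i = M := if_pos rfl

lemma GEX''_at_i1 (i : ℤ) (M : A) : GEX'' i M (i + 1) = M := by
  have : i + 1 ≠ i := by omega
  simp [GEX'', this]

lemma GEX''_other (i : ℤ) (M : A) (j : ℤ) (h1 : j ≠ i) (h2 : j ≠ i + 1) :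
    GEX'' i M j = 0 := by
  simp [GEX'', h1, h2]

/-- The differentials of the contractible complex. -/
def GEd'' (i : ℤ) (M : A) (j : ℤ) : GEX'' i M j ⟶ GEX'' i M (j + 1) :=
  if hj : j = i then
    eqToHom (by rw [hj]; exact (GEX''_at_i i M).trans (GEX''_at_i1 i M).symm)
  else 0

section Squares

variable (C : CochainComplex A ℤ) (i : ℤ) (M Bi Bi1 : A) (g : Bi ⟶ Bi1)
  (U : C.X i ≅ M ⊞ Bi) (V : C.X (i + 1) ≅ M ⊞ Bi1)
  (hUV : U.inv ≫ C.d i (i + 1) ≫ V.hom = biprod.map (𝟙 M) g)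

include hUV

lemma GE_d_eq : C.d i (i + 1) = U.hom ≫ biprod.map (𝟙 M) g ≫ V.inv := by
  rw [← hUV]
  simp

lemma GE_dU_fst (j : ℤ) : C.d j i ≫ U.hom ≫ biprod.fst = 0 := by
  have h0 : C.d j i ≫ C.d i (i + 1) = 0 := C.d_comp_d _ _ _
  rw [GE_d_eq C i M Bi Bi1 g U V hUV] at h0
  have h1 := congrArg (fun t => t ≫ V.hom) h0
  simp only [Category.assoc, Iso.inv_hom_id, Category.comp_id, zero_comp] at h1
  have h2 := congrArg (fun t => t ≫ (biprod.fst : M ⊞ Bi1 ⟶ M)) h1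
  simpa using h2

lemma GE_dU_snd_g (j : ℤ) : C.d j i ≫ U.hom ≫ biprod.snd ≫ g = 0 := by
  have h0 : C.d j i ≫ C.d i (i + 1) = 0 := C.d_comp_d _ _ _
  rw [GE_d_eq C i M Bi Bi1 g U V hUV] at h0
  have h1 := congrArg (fun t => t ≫ V.hom) h0
  simp only [Category.assoc, Iso.inv_hom_id, Category.comp_id, zero_comp] at h1
  have h2 := congrArg (fun t => t ≫ (biprod.snd : M ⊞ Bi1 ⟶ Bi1)) h1
  simpa using h2

lemma GE_inl_Vd (j : ℤ) : biprod.inl ≫ V.inv ≫ C.d (i + 1) j = 0 := by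
  have h0 : C.d i (i + 1) ≫ C.d (i + 1) j = 0 := C.d_comp_d _ _ _
  rw [GE_d_eq C i M Bi Bi1 g U V hUV] at h0
  have h1 := congrArg (fun t => U.inv ≫ t) h0
  simp only [Iso.inv_hom_id_assoc, Limits.comp_zero] at h1
  have h2 := congrArg (fun t => (biprod.inl : M ⟶ M ⊞ Bi) ≫ t) h1
  simpa using h2

lemma GE_g_inr_Vd (j : ℤ) : g ≫ biprod.inr ≫ V.inv ≫ C.d (i + 1) j = 0 := by
  have h0 : C.d i (i + 1) ≫ C.d (i + 1) j = 0 := C.d_comp_d _ _ _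
  rw [GE_d_eq C i M Bi Bi1 g U V hUV] at h0
  have h1 := congrArg (fun t => U.inv ≫ t) h0
  simp only [Iso.inv_hom_id_assoc, Limits.comp_zero] at h1
  have h2 := congrArg (fun t => (biprod.inr : Bi ⟶ M ⊞ Bi) ≫ t) h1
  simpa using h2

lemma GEd'_sq (j : ℤ) :
    GEd' C i M Bi Bi1 g U V j ≫ GEd' C i M Bi Bi1 g U V (j + 1) = 0 := by
  by_cases hj : j = i
  · subst hj
    rw [GEd', GEd']
    rw [dif_pos rfl, dif_neg (by omega : ¬ j + 1 = j), dif_neg (by omega : ¬ j + 1 + 1 = j),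
      dif_pos rfl]
    have := GE_g_inr_Vd C j M Bi Bi1 g U V hUV (j + 1 + 1)
    simp only [Category.assoc, eqToHom_trans_assoc, eqToHom_refl, Category.id_comp]
    rw [reassoc_of% this]
    simp
  · by_cases hj1 : j + 1 = i
    · have hj1' : i = j + 1 := hj1.symm
      subst hj1'
      rw [GEd', GEd']
      rw [dif_neg hj, dif_pos rfl, dif_pos rfl]
      have := GE_dU_snd_g C (j + 1) M Bi Bi1 g U V hUV j
      simp only [Category.assoc, eqToHom_trans_assoc, eqToHom_refl, Category.id_comp]
      rw [reassoc_of% this]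
      simp
    · by_cases hj2 : j = i + 1
      · subst hj2
        rw [GEd', GEd']
        rw [dif_neg hj, dif_neg hj1, dif_pos rfl,
          dif_neg (by omega : ¬ i + 1 + 1 = i), dif_neg (by omega : ¬ i + 1 + 1 + 1 = i),
          dif_neg (by omega : ¬ i + 1 + 1 = i + 1)]
        simp only [Category.assoc, eqToHom_trans_assoc, eqToHom_refl, Category.id_comp]
        rw [C.d_comp_d_assoc]
        simp
      · by_cases hj3 : j + 1 + 1 = i
        · have hj3' : i = j + 1 + 1 := hj3.symm
          subst hj3'
          rw [GEd', GEd']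
          rw [dif_neg hj, dif_neg hj1, dif_neg hj2,
            dif_neg (by omega : ¬ j + 1 = j + 1 + 1), dif_pos rfl]
          simp only [Category.assoc, eqToHom_trans_assoc, eqToHom_refl, Category.id_comp]
          rw [C.d_comp_d_assoc]
          simp
        · rw [GEd', GEd']
          rw [dif_neg hj, dif_neg hj1, dif_neg hj2, dif_neg (by omega : ¬ j + 1 = i),
            dif_neg hj3, dif_neg (by omega : ¬ j + 1 = i + 1)]
          simp only [Category.assoc, eqToHom_trans_assoc, eqToHom_refl, Category.id_comp]
          rw [C.d_comp_d_assoc]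
          simp

end Squares

lemma GEd''_sq (i : ℤ) (M : A) (j : ℤ) : GEd'' i M j ≫ GEd'' i M (j + 1) = 0 := by
  by_cases hj : j = i
  · subst hj
    rw [GEd'', GEd'', dif_pos rfl, dif_neg (by omega : ¬ j + 1 = j)]
    simp
  · rw [GEd'', dif_neg hj, zero_comp]

/-- The reduced complex. -/
abbrev GEC' (C : CochainComplex A ℤ) (i : ℤ) (M Bi Bi1 : A) (g : Bi ⟶ Bi1)
    (U : C.X i ≅ M ⊞ Bi) (V : C.X (i + 1) ≅ M ⊞ Bi1)
    (hUV : U.inv ≫ C.d i (i + 1) ≫ V.hom = biprod.map (𝟙 M) g) : CochainComplex A ℤ :=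
  CochainComplex.of (GEX' C i Bi Bi1) (GEd' C i M Bi Bi1 g U V)
    (fun j => GEd'_sq C i M Bi Bi1 g U V hUV j)

/-- The contractible complex. -/
abbrev GEC'' (i : ℤ) (M : A) : CochainComplex A ℤ :=
  CochainComplex.of (GEX'' i M) (GEd'' i M) (fun j => GEd''_sq i M j)

lemma GEC'_d (C : CochainComplex A ℤ) (i : ℤ) (M Bi Bi1 : A) (g : Bi ⟶ Bi1)
    (U : C.X i ≅ M ⊞ Bi) (V : C.X (i + 1) ≅ M ⊞ Bi1)
    (hUV : U.inv ≫ C.d i (i + 1) ≫ V.hom = biprod.map (𝟙 M) g) (j : ℤ) :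
    (GEC' C i M Bi Bi1 g U V hUV).d j (j + 1) = GEd' C i M Bi Bi1 g U V j :=
  CochainComplex.of_d _ _ _

lemma GEC''_d (i : ℤ) (M : A) (j : ℤ) :
    (GEC'' i M).d j (j + 1) = GEd'' i M j :=
  CochainComplex.of_d _ _ _

end Construction

section Maps

open ZeroObject

variable [HasFiniteBiproducts A] [HasBinaryBiproducts A]
variable (C : CochainComplex A ℤ) (i : ℤ) (M Bi Bi1 : A) (g : Bi ⟶ Bi1)
  (U : C.X i ≅ M ⊞ Bi) (V : C.X (i + 1) ≅ M ⊞ Bi1)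

/-- Projection components onto the reduced complex. -/
def GEp'f (j : ℤ) : C.X j ⟶ GEX' C i Bi Bi1 j :=
  if hj : j = i then
    eqToHom (congrArg C.X hj) ≫ U.hom ≫ biprod.snd ≫
      eqToHom (by rw [hj]; exact (GEX'_at_i C i Bi Bi1).symm)
  else if hj2 : j = i + 1 then
    eqToHom (congrArg C.X hj2) ≫ V.hom ≫ biprod.snd ≫
      eqToHom (by rw [hj2]; exact (GEX'_at_i1 C i Bi Bi1).symm)
  else eqToHom (GEX'_other C i Bi Bi1 j hj hj2).symm

/-- Inclusion components from the reduced complex. -/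
def GEi'f (j : ℤ) : GEX' C i Bi Bi1 j ⟶ C.X j :=
  if hj : j = i then
    eqToHom (by rw [hj]; exact GEX'_at_i C i Bi Bi1) ≫ biprod.inr ≫ U.inv ≫
      eqToHom (congrArg C.X hj).symm
  else if hj2 : j = i + 1 then
    eqToHom (by rw [hj2]; exact GEX'_at_i1 C i Bi Bi1) ≫ biprod.inr ≫ V.inv ≫
      eqToHom (congrArg C.X hj2).symm
  else eqToHom (GEX'_other C i Bi Bi1 j hj hj2)

/-- Projection components onto the contractible complex. -/
def GEp''f (j : ℤ) : C.X j ⟶ GEX'' i M j :=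
  if hj : j = i then
    eqToHom (congrArg C.X hj) ≫ U.hom ≫ biprod.fst ≫
      eqToHom (by rw [hj]; exact (GEX''_at_i i M).symm)
  else if hj2 : j = i + 1 then
    eqToHom (congrArg C.X hj2) ≫ V.hom ≫ biprod.fst ≫
      eqToHom (by rw [hj2]; exact (GEX''_at_i1 i M).symm)
  else 0

/-- Inclusion components from the contractible complex. -/
def GEi''f (j : ℤ) : GEX'' i M j ⟶ C.X j :=
  if hj : j = i then
    eqToHom (by rw [hj]; exact GEX''_at_i i M) ≫ biprod.inl ≫ U.inv ≫
      eqToHom (congrArg C.X hj).symm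
  else if hj2 : j = i + 1 then
    eqToHom (by rw [hj2]; exact GEX''_at_i1 i M) ≫ biprod.inl ≫ V.inv ≫
      eqToHom (congrArg C.X hj2).symm
  else 0

variable (hUV : U.inv ≫ C.d i (i + 1) ≫ V.hom = biprod.map (𝟙 M) g)

/-- The projection chain map onto the reduced complex. -/
def GEp' : C ⟶ GEC' C i M Bi Bi1 g U V hUV where
  f := GEp'f C i M Bi Bi1 U V
  comm' := by
    intro j k hjk
    have hk : j + 1 = k := hjk
    subst hk
    show GEp'f C i M Bi Bi1 U V j ≫ (GEC' C i M Bi Bi1 g U V hUV).d j (j + 1)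
      = C.d j (j + 1) ≫ GEp'f C i M Bi Bi1 U V (j + 1)
    rw [GEC'_d]
    by_cases hj : j = i
    · subst hj
      rw [GEp'f, GEp'f, GEd']
      rw [dif_pos rfl, dif_pos rfl, dif_neg (by omega : ¬ j + 1 = j), dif_pos rfl]
      rw [GE_d_eq C j M Bi Bi1 g U V hUV]
      simp
    · by_cases hj1 : j + 1 = i
      · have hj1' : i = j + 1 := hj1.symm
        subst hj1'
        rw [GEp'f, GEp'f, GEd']
        rw [dif_neg hj, dif_neg (by omega : ¬ j = j + 1 + 1), dif_pos rfl,
          dif_neg hj, dif_pos rfl]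
        simp
      · by_cases hj2 : j = i + 1
        · subst hj2
          rw [GEp'f, GEp'f, GEd']
          rw [dif_neg hj, dif_pos rfl, dif_neg (by omega : ¬ i + 1 + 1 = i),
            dif_neg (by omega : ¬ i + 1 + 1 = i + 1), dif_neg hj,
            dif_neg (by omega : ¬ i + 1 + 1 = i), dif_pos rfl]
          have htot : C.d (i + 1) (i + 1 + 1)
              = V.hom ≫ biprod.snd ≫ biprod.inr ≫ V.inv ≫ C.d (i + 1) (i + 1 + 1) := by
            have h1 : C.d (i + 1) (i + 1 + 1) = V.hom ≫ (biprod.fst ≫ biprod.inl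
                + biprod.snd ≫ biprod.inr) ≫ V.inv ≫ C.d (i + 1) (i + 1 + 1) := by
              rw [biprod.total]
              simp
            rw [h1, Preadditive.add_comp, Preadditive.comp_add]
            simp only [Category.assoc]
            rw [GE_inl_Vd C i M Bi Bi1 g U V hUV (i + 1 + 1)]
            simp
          conv_rhs => rw [htot]
          simp
        · rw [GEp'f, GEp'f, GEd']
          rw [dif_neg hj, dif_neg hj2, dif_neg hj, dif_neg hj1, dif_neg hj2,
            dif_neg hj1, dif_neg (by omega : ¬ j + 1 = i + 1)]
          simp

/-- The inclusion chain map from the reduced complex. -/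
def GEi' : GEC' C i M Bi Bi1 g U V hUV ⟶ C where
  f := GEi'f C i M Bi Bi1 U V
  comm' := by
    intro j k hjk
    have hk : j + 1 = k := hjk
    subst hk
    show GEi'f C i M Bi Bi1 U V j ≫ C.d j (j + 1)
      = (GEC' C i M Bi Bi1 g U V hUV).d j (j + 1) ≫ GEi'f C i M Bi Bi1 U V (j + 1)
    rw [GEC'_d]
    by_cases hj : j = i
    · subst hj
      rw [GEi'f, GEi'f, GEd']
      rw [dif_pos rfl, dif_pos rfl, dif_neg (by omega : ¬ j + 1 = j), dif_pos rfl]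
      rw [GE_d_eq C j M Bi Bi1 g U V hUV]
      simp
    · by_cases hj1 : j + 1 = i
      · have hj1' : i = j + 1 := hj1.symm
        subst hj1'
        rw [GEi'f, GEi'f, GEd']
        rw [dif_neg hj, dif_neg (by omega : ¬ j = j + 1 + 1), dif_neg hj, dif_pos rfl,
          dif_pos rfl]
        have htot : C.d j (j + 1)
            = C.d j (j + 1) ≫ U.hom ≫ biprod.snd ≫ biprod.inr ≫ U.inv := by
          have h1 : C.d j (j + 1) = C.d j (j + 1) ≫ U.hom ≫ (biprod.fst ≫ biprod.inl
              + biprod.snd ≫ biprod.inr) ≫ U.inv := by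
            rw [biprod.total]
            simp
          conv_lhs => rw [h1]
          simp only [Preadditive.comp_add, Preadditive.add_comp, Category.assoc]
          rw [reassoc_of% (GE_dU_fst C (j + 1) M Bi Bi1 g U V hUV j)]
          simp
        conv_lhs => rw [htot]
        simp
      · by_cases hj2 : j = i + 1
        · subst hj2
          rw [GEi'f, GEi'f, GEd']
          rw [dif_neg hj, dif_pos rfl, dif_neg hj, dif_neg hj1, dif_pos rfl,
            dif_neg (by omega : ¬ i + 1 + 1 = i), dif_neg (by omega : ¬ i + 1 + 1 = i + 1)]
          simp
        · rw [GEi'f, GEi'f, GEd']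
          rw [dif_neg hj, dif_neg hj2, dif_neg hj, dif_neg hj1, dif_neg hj2,
            dif_neg (by omega : ¬ j + 1 = i), dif_neg (by omega : ¬ j + 1 = i + 1)]
          simp

/-- The projection chain map onto the contractible complex. -/
def GEp'' : C ⟶ GEC'' i M where
  f := GEp''f C i M Bi Bi1 U V
  comm' := by
    intro j k hjk
    have hk : j + 1 = k := hjk
    subst hk
    show GEp''f C i M Bi Bi1 U V j ≫ (GEC'' i M).d j (j + 1)
      = C.d j (j + 1) ≫ GEp''f C i M Bi Bi1 U V (j + 1)
    rw [GEC''_d]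
    by_cases hj : j = i
    · subst hj
      rw [GEp''f, GEp''f, GEd'']
      rw [dif_pos rfl, dif_pos rfl, dif_neg (by omega : ¬ j + 1 = j), dif_pos rfl]
      rw [GE_d_eq C j M Bi Bi1 g U V hUV]
      simp
    · by_cases hj1 : j + 1 = i
      · have hj1' : i = j + 1 := hj1.symm
        subst hj1'
        rw [GEp''f, GEp''f, GEd'']
        rw [dif_neg hj, dif_neg (by omega : ¬ j = j + 1 + 1), dif_neg hj, dif_pos rfl]
        rw [zero_comp]
        rw [← Category.assoc, ← Category.assoc]
        rw [show (C.d j (j + 1) ≫ eqToHom (congrArg C.X (rfl : j + 1 = j + 1))) ≫ U.hom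
          = C.d j (j + 1) ≫ U.hom by simp]
        rw [Category.assoc]
        rw [reassoc_of% (GE_dU_fst C (j + 1) M Bi Bi1 g U V hUV j)]
        simp
      · by_cases hj2 : j = i + 1
        · subst hj2
          rw [GEp''f, GEp''f, GEd'']
          rw [dif_neg hj, dif_pos rfl, dif_neg hj,
            dif_neg (by omega : ¬ i + 1 + 1 = i), dif_neg (by omega : ¬ i + 1 + 1 = i + 1)]
          simp
        · rw [GEp''f, GEp''f, GEd'']
          rw [dif_neg hj, dif_neg hj2, dif_neg hj,
            dif_neg (by omega : ¬ j + 1 = i), dif_neg (by omega : ¬ j + 1 = i + 1)]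
          simp

/-- The inclusion chain map from the contractible complex. -/
def GEi'' : GEC'' i M ⟶ C where
  f := GEi''f C i M Bi Bi1 U V
  comm' := by
    intro j k hjk
    have hk : j + 1 = k := hjk
    subst hk
    show GEi''f C i M Bi Bi1 U V j ≫ C.d j (j + 1)
      = (GEC'' i M).d j (j + 1) ≫ GEi''f C i M Bi Bi1 U V (j + 1)
    rw [GEC''_d]
    by_cases hj : j = i
    · subst hj
      rw [GEi''f, GEi''f, GEd'']
      rw [dif_pos rfl, dif_pos rfl, dif_neg (by omega : ¬ j + 1 = j), dif_pos rfl]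
      rw [GE_d_eq C j M Bi Bi1 g U V hUV]
      simp
    · by_cases hj1 : j + 1 = i
      · have hj1' : i = j + 1 := hj1.symm
        subst hj1'
        rw [GEi''f, GEi''f, GEd'']
        rw [dif_neg hj, dif_neg (by omega : ¬ j = j + 1 + 1), dif_neg hj]
        simp
      · by_cases hj2 : j = i + 1
        · subst hj2
          rw [GEi''f, GEi''f, GEd'']
          rw [dif_neg hj, dif_pos rfl, dif_neg hj]
          rw [zero_comp]
          simp only [eqToHom_refl, Category.comp_id, Category.id_comp, Category.assoc]
          rw [GE_inl_Vd C i M Bi Bi1 g U V hUV (i + 1 + 1)]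
          simp
        · rw [GEi''f, GEi''f, GEd'']
          rw [dif_neg hj, dif_neg hj2, dif_neg hj]
          simp

end Maps

section Bicone

open ZeroObject

variable [HasFiniteBiproducts A] [HasBinaryBiproducts A]

lemma GE_conj_total {X P Q : A} (u : X ≅ P ⊞ Q) :
    u.hom ≫ biprod.snd ≫ biprod.inr ≫ u.inv
      + u.hom ≫ biprod.fst ≫ biprod.inl ≫ u.inv = 𝟙 X := by
  have h0 : u.hom ≫ (biprod.fst ≫ biprod.inl + biprod.snd ≫ biprod.inr) ≫ u.inv = 𝟙 X := by
    rw [biprod.total]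
    simp
  calc u.hom ≫ biprod.snd ≫ biprod.inr ≫ u.inv + u.hom ≫ biprod.fst ≫ biprod.inl ≫ u.inv
      = u.hom ≫ (biprod.fst ≫ biprod.inl + biprod.snd ≫ biprod.inr) ≫ u.inv := by
        simp only [Preadditive.add_comp, Preadditive.comp_add, Category.assoc]
        rw [add_comm]
    _ = 𝟙 X := h0

variable (C : CochainComplex A ℤ) (i : ℤ) (M Bi Bi1 : A) (g : Bi ⟶ Bi1)
  (U : C.X i ≅ M ⊞ Bi) (V : C.X (i + 1) ≅ M ⊞ Bi1)
  (hUV : U.inv ≫ C.d i (i + 1) ≫ V.hom = biprod.map (𝟙 M) g)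

lemma GE_i'p' : GEi' C i M Bi Bi1 g U V hUV ≫ GEp' C i M Bi Bi1 g U V hUV
    = 𝟙 (GEC' C i M Bi Bi1 g U V hUV) := by
  apply HomologicalComplex.hom_ext
  intro j
  show GEi'f C i M Bi Bi1 U V j ≫ GEp'f C i M Bi Bi1 U V j = 𝟙 _
  by_cases hj : j = i
  · subst hj
    rw [GEi'f, GEp'f, dif_pos rfl, dif_pos rfl]
    simp
  · by_cases hj2 : j = i + 1
    · subst hj2
      rw [GEi'f, GEp'f, dif_neg hj, dif_neg hj, dif_pos rfl, dif_pos rfl]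
      simp
    · rw [GEi'f, GEp'f, dif_neg hj, dif_neg hj, dif_neg hj2, dif_neg hj2]
      simp

lemma GE_i''p'' : GEi'' C i M Bi Bi1 g U V hUV ≫ GEp'' C i M Bi Bi1 g U V hUV
    = 𝟙 (GEC'' i M) := by
  apply HomologicalComplex.hom_ext
  intro j
  show GEi''f C i M Bi Bi1 U V j ≫ GEp''f C i M Bi Bi1 U V j = 𝟙 _
  by_cases hj : j = i
  · subst hj
    rw [GEi''f, GEp''f, dif_pos rfl, dif_pos rfl]
    simp
  · by_cases hj2 : j = i + 1
    · subst hj2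
      rw [GEi''f, GEp''f, dif_neg hj, dif_neg hj, dif_pos rfl, dif_pos rfl]
      simp
    · rw [GEi''f, GEp''f, dif_neg hj, dif_neg hj, dif_neg hj2, dif_neg hj2]
      have hz : IsZero (GEX'' i M j) := by
        rw [GEX''_other i M j hj hj2]
        exact isZero_zero A
      exact hz.eq_of_src _ _

lemma GE_i'p'' : GEi' C i M Bi Bi1 g U V hUV ≫ GEp'' C i M Bi Bi1 g U V hUV = 0 := by
  apply HomologicalComplex.hom_ext
  intro j
  show GEi'f C i M Bi Bi1 U V j ≫ GEp''f C i M Bi Bi1 U V j = 0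
  by_cases hj : j = i
  · subst hj
    rw [GEi'f, GEp''f, dif_pos rfl, dif_pos rfl]
    simp
  · by_cases hj2 : j = i + 1
    · subst hj2
      rw [GEi'f, GEp''f, dif_neg hj, dif_neg hj, dif_pos rfl, dif_pos rfl]
      simp
    · rw [GEp''f, dif_neg hj, dif_neg hj2]
      simp

lemma GE_i''p' : GEi'' C i M Bi Bi1 g U V hUV ≫ GEp' C i M Bi Bi1 g U V hUV = 0 := by
  apply HomologicalComplex.hom_ext
  intro j
  show GEi''f C i M Bi Bi1 U V j ≫ GEp'f C i M Bi Bi1 U V j = 0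
  by_cases hj : j = i
  · subst hj
    rw [GEi''f, GEp'f, dif_pos rfl, dif_pos rfl]
    simp
  · by_cases hj2 : j = i + 1
    · subst hj2
      rw [GEi''f, GEp'f, dif_neg hj, dif_neg hj, dif_pos rfl, dif_pos rfl]
      simp
    · rw [GEi''f, dif_neg hj, dif_neg hj2]
      simp

lemma GE_total : GEp' C i M Bi Bi1 g U V hUV ≫ GEi' C i M Bi Bi1 g U V hUV
    + GEp'' C i M Bi Bi1 g U V hUV ≫ GEi'' C i M Bi Bi1 g U V hUV = 𝟙 C := by
  apply HomologicalComplex.hom_ext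
  intro j
  rw [HomologicalComplex.add_f_apply]
  show GEp'f C i M Bi Bi1 U V j ≫ GEi'f C i M Bi Bi1 U V j
    + GEp''f C i M Bi Bi1 U V j ≫ GEi''f C i M Bi Bi1 U V j = 𝟙 (C.X j)
  by_cases hj : j = i
  · subst hj
    rw [GEp'f, GEi'f, GEp''f, GEi''f, dif_pos rfl, dif_pos rfl, dif_pos rfl, dif_pos rfl]
    simp only [eqToHom_refl, Category.id_comp, Category.comp_id, Category.assoc,
      eqToHom_trans_assoc]
    exact GE_conj_total U
  · by_cases hj2 : j = i + 1
    · subst hj2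
      rw [GEp'f, GEi'f, GEp''f, GEi''f, dif_neg hj, dif_neg hj, dif_neg hj, dif_neg hj,
        dif_pos rfl, dif_pos rfl, dif_pos rfl, dif_pos rfl]
      simp only [eqToHom_refl, Category.id_comp, Category.comp_id, Category.assoc,
        eqToHom_trans_assoc]
      exact GE_conj_total V
    · rw [GEp'f, GEi'f, GEp''f, GEi''f, dif_neg hj, dif_neg hj, dif_neg hj, dif_neg hj,
        dif_neg hj2, dif_neg hj2, dif_neg hj2, dif_neg hj2]
      simp

/-- The binary bicone exhibiting `C` as the biproduct of the two complexes. -/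
def GEbicone : BinaryBicone (GEC' C i M Bi Bi1 g U V hUV) (GEC'' i M) where
  pt := C
  fst := GEp' C i M Bi Bi1 g U V hUV
  snd := GEp'' C i M Bi Bi1 g U V hUV
  inl := GEi' C i M Bi Bi1 g U V hUV
  inr := GEi'' C i M Bi Bi1 g U V hUV
  inl_fst := GE_i'p' C i M Bi Bi1 g U V hUV
  inl_snd := GE_i'p'' C i M Bi Bi1 g U V hUV
  inr_fst := GE_i''p' C i M Bi Bi1 g U V hUV
  inr_snd := GE_i''p'' C i M Bi Bi1 g U V hUV

/-- `C` is isomorphic to the biproduct. -/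
def GEiso : C ≅ (GEC' C i M Bi Bi1 g U V hUV) ⊞ (GEC'' i M) :=
  biprod.uniqueUpToIso _ _ (isBinaryBilimitOfTotal (GEbicone C i M Bi Bi1 g U V hUV)
    (GE_total C i M Bi Bi1 g U V hUV))

/-- The homotopy components. -/
def GEhf (j k : ℤ) : C.X j ⟶ C.X k :=
  if h : j = i + 1 ∧ k = i then
    -(eqToHom (congrArg C.X h.1) ≫ V.hom ≫ biprod.fst ≫ biprod.inl ≫ U.inv ≫
      eqToHom (congrArg C.X h.2).symm)
  else 0

/-- The homotopy showing `p' ≫ i'` is homotopic to the identity. -/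
def GEhomotopy : Homotopy (GEp' C i M Bi Bi1 g U V hUV ≫ GEi' C i M Bi Bi1 g U V hUV)
    (𝟙 C) where
  hom := GEhf C i M Bi Bi1 U V
  zero := by
    intro j k hk
    rw [GEhf, dif_neg]
    rintro ⟨h1, h2⟩
    exact hk (by subst h1; subst h2; simp)
  comm := by
    intro j
    rw [dNext_eq _ (show (ComplexShape.up ℤ).Rel j (j + 1) by simp)]
    show (GEp' C i M Bi Bi1 g U V hUV ≫ GEi' C i M Bi Bi1 g U V hUV).f j
      = C.d j (j + 1) ≫ GEhf C i M Bi Bi1 U V (j + 1) j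
        + prevD j (GEhf C i M Bi Bi1 U V) + 𝟙 (C.X j)
    rw [HomologicalComplex.comp_f]
    show GEp'f C i M Bi Bi1 U V j ≫ GEi'f C i M Bi Bi1 U V j = _
    by_cases hj : j = i
    · subst hj
      rw [prevD_eq _ (show (ComplexShape.up ℤ).Rel (j - 1) j by simp)]
      rw [GEp'f, GEi'f, GEhf, GEhf, dif_pos rfl, dif_pos rfl, dif_pos ⟨rfl, rfl⟩,
        dif_neg (by rintro ⟨h1, -⟩; omega : ¬ (j = j + 1 ∧ j - 1 = j))]
      rw [GE_d_eq C j M Bi Bi1 g U V hUV]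
      simp only [eqToHom_refl, Category.id_comp, Category.comp_id, Category.assoc,
        eqToHom_trans_assoc, zero_comp, add_zero, Preadditive.comp_neg,
        Iso.inv_hom_id_assoc, biprod.map_fst_assoc, Category.id_comp]
      have := GE_conj_total U
      linear_combination (norm := abel) this
    · by_cases hj2 : j = i + 1
      · subst hj2
        rw [prevD_eq _ (show (ComplexShape.up ℤ).Rel i (i + 1) by simp)]
        rw [GEp'f, GEi'f, GEhf, GEhf, dif_neg hj, dif_neg hj, dif_pos rfl, dif_pos rfl,
          dif_neg (by rintro ⟨h1, -⟩; omega : ¬ (i + 1 + 1 = i + 1 ∧ i + 1 = i)),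
          dif_pos ⟨rfl, rfl⟩]
        rw [GE_d_eq C i M Bi Bi1 g U V hUV]
        simp only [eqToHom_refl, Category.id_comp, Category.comp_id, Category.assoc,
          eqToHom_trans_assoc, comp_zero, Preadditive.neg_comp, Category.assoc,
          Iso.inv_hom_id_assoc, biprod.inl_map_assoc, Category.id_comp, zero_add,
          Preadditive.comp_neg]
        have := GE_conj_total V
        linear_combination (norm := abel) this
      · rw [prevD_eq _ (show (ComplexShape.up ℤ).Rel (j - 1) j by simp)]
        rw [GEp'f, GEi'f, GEhf, GEhf, dif_neg hj, dif_neg hj, dif_neg hj2, dif_neg hj2,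
          dif_neg (by rintro ⟨-, h2⟩; exact hj h2 : ¬ (j + 1 = i + 1 ∧ j = i)),
          dif_neg (by rintro ⟨h1, -⟩; exact hj2 h1 : ¬ (j = i + 1 ∧ j - 1 = i))]
        simp

/-- The homotopy equivalence between `C` and the reduced complex. -/
def GEhomotopyEquiv : HomotopyEquiv C (GEC' C i M Bi Bi1 g U V hUV) where
  hom := GEp' C i M Bi Bi1 g U V hUV
  inv := GEi' C i M Bi Bi1 g U V hUV
  homotopyHomInvId := GEhomotopy C i M Bi Bi1 g U V hUV
  homotopyInvHomId := Homotopy.ofEq (GE_i'p' C i M Bi Bi1 g U V hUV)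

include g U V hUV in
/-- Main construction lemma. -/
lemma GE_main (hM : Indecomposable M) :
    ∃ (C' C'' : CochainComplex A ℤ) (_ : C ≅ C' ⊞ C''),
      Indecomposable M ∧
      Nonempty (C.X i ≅ Bi ⊞ M) ∧ Nonempty (C.X (i + 1) ≅ Bi1 ⊞ M) ∧
      C'.X i = Bi ∧ C'.X (i + 1) = Bi1 ∧
      (∀ j : ℤ, j ≠ i → j ≠ i + 1 → C'.X j = C.X j) ∧
      (∃ (h1 : C''.X i = M) (h2 : C''.X (i + 1) = M),
        C''.d i (i + 1) = CategoryTheory.eqToHom (h1.trans h2.symm)) ∧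
      (∀ j : ℤ, j ≠ i → j ≠ i + 1 → IsZero (C''.X j)) ∧
      Nonempty (HomotopyEquiv C C') := by
  refine ⟨GEC' C i M Bi Bi1 g U V hUV, GEC'' i M, GEiso C i M Bi Bi1 g U V hUV, hM,
    ⟨U ≪≫ biprod.braiding M Bi⟩, ⟨V ≪≫ biprod.braiding M Bi1⟩,
    GEX'_at_i C i Bi Bi1, GEX'_at_i1 C i Bi Bi1,
    (fun j h1 h2 => GEX'_other C i Bi Bi1 j h1 h2),
    ⟨GEX''_at_i i M, GEX''_at_i1 i M, ?_⟩,
    (fun j h1 h2 => ?_),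
    ⟨GEhomotopyEquiv C i M Bi Bi1 g U V hUV⟩⟩
  · show (GEC'' i M).d i (i + 1) = _
    rw [GEC''_d, GEd'', dif_pos rfl]
  · show IsZero (GEX'' i M j)
    rw [GEX''_other i M j h1 h2]
    exact isZero_zero A

end Bicone

end GEaux

end

attribute [local instance] CategoryTheory.Limits.hasBinaryBiproducts_of_finite_biproducts
attribute [local instance] CategoryTheory.Limits.HasBinaryBiproducts.of_hasBinaryProducts

/-- A preadditive category with finite biproducts is *Krull–Schmidt* if every object is
isomorphic to a finite biproduct of objects whose endomorphism rings are local. -/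
def CategoryTheory.IsKrullSchmidt (A : Type u) [Category.{v} A] [Preadditive A]
    [HasFiniteBiproducts A] : Prop :=
  ∀ X : A, ∃ (n : ℕ) (Y : Fin n → A),
    Nonempty (X ≅ ⨁ Y) ∧ ∀ i, IsLocalRing (End (Y i))

/-- Gaussian elimination: if some differential of a complex `C` over a Krull–Schmidt category
does not lie in the radical, then `C` splits off a two-term contractible complex
`⋯ → 0 → M → M → 0 → ⋯` on an indecomposable object `M`. -/
theorem gaussian_elimination
    {A : Type u} [Category.{v} A] [Preadditive A] [HasFiniteBiproducts A]
    (hKS : CategoryTheory.IsKrullSchmidt A)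
    (C : CochainComplex A ℤ) (i : ℤ)
    (hd : ¬ CategoryTheory.InRadical (C.d i (i + 1))) :
    ∃ (M Bi Bi1 : A) (C' C'' : CochainComplex A ℤ) (_ : C ≅ C' ⊞ C''),
      Indecomposable M ∧
      Nonempty (C.X i ≅ Bi ⊞ M) ∧ Nonempty (C.X (i + 1) ≅ Bi1 ⊞ M) ∧
      C'.X i = Bi ∧ C'.X (i + 1) = Bi1 ∧
      (∀ j : ℤ, j ≠ i → j ≠ i + 1 → C'.X j = C.X j) ∧
      (∃ (h1 : C''.X i = M) (h2 : C''.X (i + 1) = M),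
        C''.d i (i + 1) = CategoryTheory.eqToHom (h1.trans h2.symm)) ∧
      (∀ j : ℤ, j ≠ i → j ≠ i + 1 → IsZero (C''.X j)) ∧
      Nonempty (HomotopyEquiv C C') := by
  classical
  obtain ⟨n, Yc, ⟨eX⟩, hYl⟩ := hKS (C.X i)
  obtain ⟨m, Wc, ⟨eY⟩, hWl⟩ := hKS (C.X (i + 1))
  obtain ⟨k, l, hkl⟩ := GEaux.exists_component_not_inRadical (C.d i (i + 1)) hd Yc Wc eX eY
  haveI hk := hYl k
  haveI hl := hWl l
  have hφ : IsIso (biproduct.ι Yc k ≫ eX.inv ≫ C.d i (i + 1) ≫ eY.hom ≫ biproduct.π Wc l) := by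
    by_contra hni
    exact hkl (GEaux.inRadical_of_not_isIso hni)
  obtain ⟨sX, hsX1, hsX2⟩ := GEaux.biproduct_splitOff Yc k
  obtain ⟨sY, hsY1, hsY2⟩ := GEaux.biproduct_splitOff Wc l
  set D : Yc k ⊞ (⨁ (fun j : {j : Fin n // j ≠ k} => Yc j.1)) ⟶ Wc l ⊞ (⨁ (fun j : {j : Fin m // j ≠ l} => Wc j.1)) := (eX ≪≫ sX).inv ≫ C.d i (i + 1) ≫ (eY ≪≫ sY).hom
    with hDdef
  have hD : biprod.inl ≫ D ≫ biprod.fst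
      = biproduct.ι Yc k ≫ eX.inv ≫ C.d i (i + 1) ≫ eY.hom ≫ biproduct.π Wc l := by
    rw [hDdef]
    simp only [Iso.trans_inv, Iso.trans_hom, Category.assoc]
    rw [reassoc_of% hsX2, hsY1]
  haveI hDiso : IsIso (biprod.inl ≫ D ≫ biprod.fst) := by
    rw [hD]
    exact hφ
  obtain ⟨L, R, g2, hw⟩ := Biprod.gaussian D
  set φ' : Yc k ⟶ Wc l := biprod.inl ≫ D ≫ biprod.fst with hφ'def
  set U : C.X i ≅ Yc k ⊞ (⨁ (fun j : {j : Fin n // j ≠ k} => Yc j.1)) := (eX ≪≫ sX) ≪≫ L.symm with hU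
  set V : C.X (i + 1) ≅ Yc k ⊞ (⨁ (fun j : {j : Fin m // j ≠ l} => Wc j.1)) :=
    (eY ≪≫ sY) ≪≫ (R ≪≫ biprod.mapIso (asIso φ').symm (Iso.refl (⨁ (fun j : {j : Fin m // j ≠ l} => Wc j.1)))) with hV
  have hUV : U.inv ≫ C.d i (i + 1) ≫ V.hom = biprod.map (𝟙 (Yc k)) g2 := by
    have e1 : U.inv ≫ C.d i (i + 1) ≫ V.hom
        = L.hom ≫ D ≫ R.hom ≫ biprod.map (inv φ') (𝟙 (⨁ (fun j : {j : Fin m // j ≠ l} => Wc j.1))) := by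
      rw [hU, hV, hDdef]
      simp only [Iso.trans_inv, Iso.trans_hom, Iso.symm_inv, Iso.symm_hom,
        biprod.mapIso_hom, asIso_inv, Iso.refl_hom, Category.assoc]
    rw [e1, reassoc_of% hw]
    apply biprod.hom_ext'
    · simp
    · simp
  have hM : Indecomposable (Yc k) := GEaux.indecomposable_of_isLocalRing hk
  obtain ⟨C', C'', iso, rest⟩ := GEaux.GE_main C i (Yc k) (⨁ (fun j : {j : Fin n // j ≠ k} => Yc j.1)) (⨁ (fun j : {j : Fin m // j ≠ l} => Wc j.1)) g2 U V hUV hM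
  exact ⟨Yc k, ⨁ (fun j : {j : Fin n // j ≠ k} => Yc j.1), ⨁ (fun j : {j : Fin m // j ≠ l} => Wc j.1), C', C'', iso, rest⟩
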